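/- Let G = (V, E) be a finite multigraph with edge weights w : E → ℝ_{≥0}, and for R ⊆ E let val(R) denote the minimum w-weight of a spanning tree of (V, E \ R), restricted to sets R such that (V, E \ R) is connected. Then val is supermodular on this domain: for any A₁, A₂ ⊆ E with (V, E \ (A₁ ∪ A₂)) connected, val(A₁) + val(A₂) ≤ val(A₁ ∩ A₂) + val(A₁ ∪ A₂). -/

import Mathlib

open Finset

/-- The multigraph `(V, F)`: vertex set `V`, edges are the elements of the finite
edge set `F ⊆ E`, where `ends e` gives the pair of endpoints of `e`. -/
def mgraph {V E : Type*} (ends : E → Sym2 V) (F : Finset E) : SimpleGraph V where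
  Adj u v := u ≠ v ∧ ∃ e ∈ F, ends e = s(u, v)
  symm := by
    constructor
    rintro u v ⟨h, e, he, hv⟩
    exact ⟨h.symm, e, he, by rw [hv, Sym2.eq_swap]⟩
  loopless := ⟨fun u h => h.1 rfl⟩


set_option linter.unusedSectionVars false
set_option linter.unusedVariables false

open SimpleGraph

private lemma reach_del' {V : Type*} {G : SimpleGraph V} {u v z c : V} (p : G.Walk z c) :
    (G.deleteEdges {s(u, v)}).Reachable z c ∨ (G.deleteEdges {s(u, v)}).Reachable z u ∨
      (G.deleteEdges {s(u, v)}).Reachable z v := by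
  induction p with
  | nil => exact Or.inl (Reachable.refl _)
  | @cons a b c hab q ih =>
    rcases eq_or_ne s(a, b) s(u, v) with h | h
    · rw [Sym2.eq_iff] at h
      rcases h with ⟨rfl, rfl⟩ | ⟨rfl, rfl⟩
      · exact Or.inr (Or.inl (Reachable.refl _))
      · exact Or.inr (Or.inr (Reachable.refl _))
    · have hadj : (G.deleteEdges {s(u, v)}).Adj a b := by
        simp only [deleteEdges_adj, Set.mem_singleton_iff]
        exact ⟨hab, h⟩
      rcases ih with h' | h' | h'
      · exact Or.inl (hadj.reachable.trans h')
      · exact Or.inr (Or.inl (hadj.reachable.trans h'))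
      · exact Or.inr (Or.inr (hadj.reachable.trans h'))

private lemma reach_del {V : Type*} {G : SimpleGraph V} {u v z : V} (p : G.Walk z u) :
    (G.deleteEdges {s(u, v)}).Reachable z u ∨ (G.deleteEdges {s(u, v)}).Reachable z v := by
  rcases reach_del' (u := u) (v := v) p with h | h | h
  · exact Or.inl h
  · exact Or.inl h
  · exact Or.inr h

private lemma conn_del {V : Type*} {G : SimpleGraph V} {u v : V} (hc : G.Connected)
    (h : (G.deleteEdges {s(u, v)}).Reachable u v) : (G.deleteEdges {s(u, v)}).Connected := by
  have hne : Nonempty V := hc.nonempty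
  refine ⟨fun a b => ?_⟩
  have ha := reach_del (v := v) ((hc a u).some)
  have hb := reach_del (v := v) ((hc b u).some)
  rcases ha with ha | ha <;> rcases hb with hb | hb
  · exact ha.trans hb.symm
  · exact ha.trans (h.trans hb.symm)
  · exact ha.trans (h.symm.trans hb.symm)
  · exact ha.trans hb.symm

private lemma exists_cross {V : Type*} {G : SimpleGraph V} {u v : V} (S : Set V)
    (p : G.Walk u v) (hp : p.IsTrail) (hu : u ∈ S) (hv : v ∉ S) :
    ∃ x y, x ∈ S ∧ y ∉ S ∧ G.Adj x y ∧
      (G.deleteEdges {s(x, y)}).Reachable u x ∧ (G.deleteEdges {s(x, y)}).Reachable y v := by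
  induction p with
  | nil => exact absurd hu hv
  | @cons a b c hab q ih =>
    rw [SimpleGraph.Walk.isTrail_cons] at hp
    by_cases hb : b ∈ S
    · obtain ⟨x, y, hxS, hyS, hadj, hbx, hyv⟩ := ih hp.1 hb hv
      refine ⟨x, y, hxS, hyS, hadj, ?_, hyv⟩
      have hne : s(a, b) ≠ s(x, y) := by
        intro h
        rw [Sym2.eq_iff] at h
        rcases h with ⟨rfl, rfl⟩ | ⟨rfl, rfl⟩
        · exact hyS hb
        · exact hyS hu
      have hadj' : (G.deleteEdges {s(x, y)}).Adj a b := by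
        simp only [deleteEdges_adj, Set.mem_singleton_iff]
        exact ⟨hab, hne⟩
      exact hadj'.reachable.trans hbx
    · refine ⟨a, b, hu, hb, hab, Reachable.refl _, ?_⟩
      have hq : ∀ e ∈ q.edges, e ∉ ({s(a, b)} : Set (Sym2 V)) := by
        intro e he
        simp only [Set.mem_singleton_iff]
        rintro rfl
        exact hp.2 he
      exact (q.toDeleteEdges _ hq).reachable

section MG

variable {V E : Type*} [Fintype V] [Fintype E] [DecidableEq E] {ends : E → Sym2 V}

private lemma mg_mono {T T' : Finset E} (h : T ⊆ T') : mgraph ends T ≤ mgraph ends T' := by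
  rintro u v ⟨hne, e, he, hev⟩
  exact ⟨hne, e, h he, hev⟩

variable {T : Finset E}

/-- minimality: erasing any edge disconnects -/
private def Min' (ends : E → Sym2 V) (T : Finset E) : Prop :=
  ∀ e ∈ T, ¬ (mgraph ends (T.erase e)).Connected

private lemma nodiag (hc : (mgraph ends T).Connected) (hm : Min' ends T) :
    ∀ e ∈ T, ¬ (ends e).IsDiag := by
  intro e he hd
  apply hm e he
  have : mgraph ends (T.erase e) = mgraph ends T := by
    ext u v
    constructor
    · exact fun h => mg_mono (erase_subset e T) h
    · rintro ⟨hne, f, hf, hfe⟩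
      refine ⟨hne, f, Finset.mem_erase.2 ⟨?_, hf⟩, hfe⟩
      rintro rfl
      rw [hfe] at hd
      exact hne (Sym2.mk_isDiag_iff.1 hd)
  rw [this]; exact hc

private lemma injOn (hc : (mgraph ends T).Connected) (hm : Min' ends T) :
    Set.InjOn ends T := by
  intro e he e' he' hee
  by_contra hne
  apply hm e he
  have : mgraph ends (T.erase e) = mgraph ends T := by
    ext u v
    constructor
    · exact fun h => mg_mono (erase_subset e T) h
    · rintro ⟨huv, f, hf, hfe⟩
      by_cases hfeq : f = e
      · exact ⟨huv, e', Finset.mem_erase.2 ⟨fun h => hne h.symm, he'⟩, by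
          rw [← hee, ← hfeq, hfe]⟩
      · exact ⟨huv, f, Finset.mem_erase.2 ⟨hfeq, hf⟩, hfe⟩
  rw [this]; exact hc

private lemma erase_eq_del (hinj : Set.InjOn ends T) {e : E} (he : e ∈ T) :
    mgraph ends (T.erase e) = (mgraph ends T).deleteEdges {ends e} := by
  ext u v
  simp only [deleteEdges_adj, Set.mem_singleton_iff]
  constructor
  · rintro ⟨huv, f, hf, hfe⟩
    obtain ⟨hfne, hfT⟩ := Finset.mem_erase.1 hf
    exact ⟨⟨huv, f, hfT, hfe⟩, by rw [← hfe]; exact fun h => hfne (hinj hfT he h)⟩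
  · rintro ⟨⟨huv, f, hf, hfe⟩, hne⟩
    refine ⟨huv, f, Finset.mem_erase.2 ⟨?_, hf⟩, hfe⟩
    rintro rfl
    exact hne hfe.symm

private lemma card_min (hc : (mgraph ends T).Connected) (hm : Min' ends T) :
    T.card + 1 = Fintype.card V := by
  classical
  have hinj := injOn hc hm
  have hnd := nodiag hc hm
  -- the graph is a tree
  have htree : (mgraph ends T).IsTree := by
    refine ⟨hc, ?_⟩
    rw [isAcyclic_iff_forall_adj_isBridge]
    rintro u v ⟨huv, e, he, hev⟩
    rw [isBridge_iff]
    intro hreach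
    apply hm e he
    have hdel : (mgraph ends T).deleteEdges {s(u, v)} =
        (mgraph ends T) \ fromEdgeSet {s(u, v)} := rfl
    rw [erase_eq_del hinj he, hev]
    exact hdel ▸ conn_del hc (hdel ▸ hreach)
  haveI : Fintype (mgraph ends T).edgeSet := Fintype.ofFinite _
  have hcard := htree.card_edgeFinset
  have hbij : T.card = (mgraph ends T).edgeFinset.card := by
    refine Finset.card_bij (fun e _ => ends e) ?_ ?_ ?_
    · intro e he
      rw [mem_edgeFinset]
      obtain ⟨⟨u, v⟩, huv⟩ := Quot.exists_rep (ends e)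
      have hev : ends e = s(u, v) := huv.symm
      show ends e ∈ (mgraph ends T).edgeSet
      rw [hev, mem_edgeSet]
      have huvne : u ≠ v := by
        intro h
        exact hnd e he (hev ▸ (Sym2.mk_isDiag_iff.2 h))
      exact ⟨huvne, e, he, hev⟩
    · intro e he e' he' h
      exact hinj he he' h
    · intro s hs
      rw [mem_edgeFinset] at hs
      induction s with
      | _ u v =>
        obtain ⟨huv, e, he, hev⟩ := (mem_edgeSet _).1 hs
        exact ⟨e, he, hev⟩
  omega

private lemma exists_min (F : Finset E) (hc : (mgraph ends F).Connected) :
    ∃ T ⊆ F, (mgraph ends T).Connected ∧ Min' ends T := by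
  classical
  induction F using Finset.strongInduction with
  | _ F ih =>
    by_cases h : Min' ends F
    · exact ⟨F, Finset.Subset.refl F, hc, h⟩
    · simp only [Min', not_forall] at h
      obtain ⟨e, he, hce⟩ := h
      rw [not_not] at hce
      obtain ⟨T, hT, hTc, hTm⟩ := ih (F.erase e) (Finset.erase_ssubset he) hce
      exact ⟨T, hT.trans (Finset.erase_subset e F), hTc, hTm⟩

private lemma min_of_card (hc : (mgraph ends T).Connected)
    (hcard : T.card + 1 = Fintype.card V) : Min' ends T := by
  intro e he hce
  obtain ⟨T', hT', hT'c, hT'm⟩ := exists_min (T.erase e) hce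
  have h1 := card_min hT'c hT'm
  have h2 : T'.card ≤ (T.erase e).card := Finset.card_le_card hT'
  rw [Finset.card_erase_of_mem he] at h2
  have h3 : 1 ≤ T.card := Finset.card_pos.2 ⟨e, he⟩
  omega

private lemma exchange {T₁ T₂ : Finset E} (hc₁ : (mgraph ends T₁).Connected)
    (hcard₁ : T₁.card + 1 = Fintype.card V) (hc₂ : (mgraph ends T₂).Connected)
    (hcard₂ : T₂.card + 1 = Fintype.card V) {e : E} (he₂ : e ∈ T₂) (he₁ : e ∉ T₁) :
    ∃ f ∈ T₁, f ∉ T₂ ∧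
      (mgraph ends (insert e (T₁.erase f))).Connected ∧
      (insert e (T₁.erase f)).card + 1 = Fintype.card V ∧
      (mgraph ends (insert f (T₂.erase e))).Connected ∧
      (insert f (T₂.erase e)).card + 1 = Fintype.card V := by
  classical
  have hm₁ := min_of_card hc₁ hcard₁
  have hm₂ := min_of_card hc₂ hcard₂
  have hinj₁ := injOn hc₁ hm₁
  have hinj₂ := injOn hc₂ hm₂
  obtain ⟨⟨u, v⟩, huv'⟩ := Quot.exists_rep (ends e)
  have hev : ends e = s(u, v) := huv'.symm
  have huv : u ≠ v := by
    intro h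
    exact nodiag hc₂ hm₂ e he₂ (hev ▸ (Sym2.mk_isDiag_iff.2 h))
  -- the cut of T₂ - e
  set G₂' := mgraph ends (T₂.erase e) with hG₂'
  have hG₂'del : G₂' = (mgraph ends T₂).deleteEdges {s(u, v)} := by
    rw [hG₂', erase_eq_del hinj₂ he₂, hev]
  set S : Set V := {z | G₂'.Reachable u z} with hS
  have huS : u ∈ S := Reachable.refl u
  have hvS : v ∉ S := by
    intro hv
    apply hm₂ e he₂
    have hv' : ((mgraph ends T₂).deleteEdges {s(u, v)}).Reachable u v := by
      rw [← hG₂'del]; exact hv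
    show (mgraph ends (T₂.erase e)).Connected
    rw [← hG₂', hG₂'del]
    exact conn_del hc₂ hv' 
  -- find the crossing edge f on a trail from u to v in T₁
  obtain ⟨x, y, hxS, hyS, hadj, hux, hyv⟩ :=
    exists_cross S ((hc₁ u v).some.toPath : (mgraph ends T₁).Path u v).1
      ((hc₁ u v).some.toPath.2.isTrail) huS hvS
  obtain ⟨hxy, f, hf₁, hfe⟩ := hadj
  have hf₂ : f ∉ T₂ := by
    intro hfT₂
    have hfne : f ≠ e := by rintro rfl; exact he₁ hf₁
    have : G₂'.Adj x y := ⟨hxy, f, Finset.mem_erase.2 ⟨hfne, hfT₂⟩, hfe⟩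
    exact hyS (hxS.trans this.reachable)
  have hG₁'del : mgraph ends (T₁.erase f) = (mgraph ends T₁).deleteEdges {s(x, y)} := by
    rw [erase_eq_del hinj₁ hf₁, hfe]
  have hux' : (mgraph ends (T₁.erase f)).Reachable u x := by rw [hG₁'del]; exact hux
  have hyv' : (mgraph ends (T₁.erase f)).Reachable y v := by rw [hG₁'del]; exact hyv
  have hVne : Nonempty V := hc₁.nonempty
  -- first tree: insert e (T₁.erase f)
  have hH₁le : mgraph ends (T₁.erase f) ≤ mgraph ends (insert e (T₁.erase f)) :=
    mg_mono (Finset.subset_insert e _)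
  have hH₁uv : (mgraph ends (insert e (T₁.erase f))).Adj u v :=
    ⟨huv, e, Finset.mem_insert_self e _, hev⟩
  have hH₁reach : ∀ z, (mgraph ends (insert e (T₁.erase f))).Reachable z u := by
    intro z
    have := reach_del (u := x) (v := y) ((hc₁ z x).some)
    rw [← hG₁'del] at this
    rcases this with h | h
    · exact (h.mono hH₁le).trans ((hux'.symm).mono hH₁le)
    · exact ((h.mono hH₁le).trans ((hyv'.mono hH₁le).trans hH₁uv.symm.reachable))
  have hH₁c : (mgraph ends (insert e (T₁.erase f))).Connected :=
    ⟨fun a b => (hH₁reach a).trans (hH₁reach b).symm⟩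
  have hH₁card : (insert e (T₁.erase f)).card + 1 = Fintype.card V := by
    rw [Finset.card_insert_of_notMem (fun h => he₁ (Finset.mem_of_mem_erase h)),
      Finset.card_erase_of_mem hf₁]
    have : 1 ≤ T₁.card := Finset.card_pos.2 ⟨f, hf₁⟩
    omega
  -- second tree: insert f (T₂.erase e)
  have hH₂le : G₂' ≤ mgraph ends (insert f (T₂.erase e)) := mg_mono (Finset.subset_insert f _)
  have hH₂xy : (mgraph ends (insert f (T₂.erase e))).Adj x y :=
    ⟨hxy, f, Finset.mem_insert_self f _, hfe⟩
  have hyv₂ : G₂'.Reachable y v := by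
    have := reach_del (u := u) (v := v) ((hc₂ y u).some)
    rw [← hG₂'del] at this
    rcases this with h | h
    · exact absurd h.symm hyS
    · exact h
  have hH₂reach : ∀ z, (mgraph ends (insert f (T₂.erase e))).Reachable z u := by
    intro z
    have := reach_del (u := u) (v := v) ((hc₂ z u).some)
    rw [← hG₂'del] at this
    rcases this with h | h
    · exact h.mono hH₂le
    · refine (h.mono hH₂le).trans ?_
      exact ((hyv₂.symm.mono hH₂le).trans (hH₂xy.symm.reachable)).trans
        ((hxS.symm).mono hH₂le)
  have hH₂c : (mgraph ends (insert f (T₂.erase e))).Connected :=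
    ⟨fun a b => (hH₂reach a).trans (hH₂reach b).symm⟩
  have hH₂card : (insert f (T₂.erase e)).card + 1 = Fintype.card V := by
    rw [Finset.card_insert_of_notMem (fun h => hf₂ (Finset.mem_of_mem_erase h)),
      Finset.card_erase_of_mem he₂]
    have : 1 ≤ T₂.card := Finset.card_pos.2 ⟨e, he₂⟩
    omega
  exact ⟨f, hf₁, hf₂, hH₁c, hH₁card, hH₂c, hH₂card⟩

end MG

/-- `val ends w R` is the minimum `w`-weight of a spanning tree of `(V, E \ R)`:
a spanning tree is a set `T` of edges disjoint from `R` such that `(V, T)` is connected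
and `|T| = |V| − 1`. -/
noncomputable def val {V E : Type*} [Fintype V] [Fintype E] [DecidableEq E]
    (ends : E → Sym2 V) (w : E → ℝ) (R : Finset E) : ℝ :=
  sInf {x : ℝ | ∃ T : Finset E, T ⊆ Finset.univ \ R ∧ (mgraph ends T).Connected ∧
    T.card = Fintype.card V - 1 ∧ x = ∑ e ∈ T, w e}


section VAL
variable {V E : Type*} [Fintype V] [Fintype E] [DecidableEq E] (ends : E → Sym2 V) (w : E → ℝ)

private def Feas (R T : Finset E) : Prop :=
  T ⊆ Finset.univ \ R ∧ (mgraph ends T).Connected ∧ T.card = Fintype.card V - 1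

private lemma valSet_eq (R : Finset E) :
    {x : ℝ | ∃ T : Finset E, T ⊆ Finset.univ \ R ∧ (mgraph ends T).Connected ∧
      T.card = Fintype.card V - 1 ∧ x = ∑ e ∈ T, w e} =
    {x : ℝ | ∃ T : Finset E, Feas ends R T ∧ x = ∑ e ∈ T, w e} := by
  ext x
  constructor
  · rintro ⟨T, h1, h2, h3, h4⟩; exact ⟨T, ⟨h1, h2, h3⟩, h4⟩
  · rintro ⟨T, ⟨h1, h2, h3⟩, h4⟩; exact ⟨T, h1, h2, h3, h4⟩

private lemma valSet_finite (R : Finset E) :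
    {x : ℝ | ∃ T : Finset E, Feas ends R T ∧ x = ∑ e ∈ T, w e}.Finite := by
  apply Set.Finite.subset (Set.finite_range (fun T : Finset E => ∑ e ∈ T, w e))
  rintro x ⟨T, _, rfl⟩
  exact ⟨T, rfl⟩

private lemma val_le {R T : Finset E} (hT : Feas ends R T) :
    val ends w R ≤ ∑ e ∈ T, w e := by
  have h : val ends w R = sInf {x : ℝ | ∃ T : Finset E, Feas ends R T ∧ x = ∑ e ∈ T, w e} :=
    congrArg sInf (valSet_eq ends w R)
  rw [h]
  exact csInf_le (Set.Finite.bddBelow (valSet_finite ends w R)) ⟨T, hT, rfl⟩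

private lemma val_mem {R : Finset E} (h : ∃ T, Feas ends R T) :
    ∃ T, Feas ends R T ∧ val ends w R = ∑ e ∈ T, w e := by
  have hne : {x : ℝ | ∃ T : Finset E, Feas ends R T ∧ x = ∑ e ∈ T, w e}.Nonempty := by
    obtain ⟨T, hT⟩ := h
    exact ⟨_, T, hT, rfl⟩
  have hmem := Set.Nonempty.csInf_mem hne (valSet_finite ends w R)
  have h : val ends w R = sInf {x : ℝ | ∃ T : Finset E, Feas ends R T ∧ x = ∑ e ∈ T, w e} :=
    congrArg sInf (valSet_eq ends w R)
  rw [h]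
  exact hmem

private lemma feas_mono {R R' T : Finset E} (h : R ⊆ R') (hT : Feas ends R' T) :
    Feas ends R T := by
  refine ⟨?_, hT.2⟩
  intro e he
  have := hT.1 he
  simp only [Finset.mem_sdiff, Finset.mem_univ, true_and] at this ⊢
  exact fun hc => this (h hc)

private lemma step (A B : Finset E) (x : E) (hAB : A ⊆ B) (hxB : x ∉ B)
    (hfeas : ∃ T, Feas ends (insert x B) T) :
    val ends w (insert x A) + val ends w B ≤ val ends w A + val ends w (insert x B) := by
  classical
  obtain ⟨T', hT', hval'⟩ := val_mem ends w hfeas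
  have hT'B : Feas ends B T' := feas_mono ends (Finset.subset_insert x B) hT'
  have hT'A : Feas ends A T' :=
    feas_mono ends (hAB.trans (Finset.subset_insert x B)) hT'
  obtain ⟨TA, hTA, hvalA⟩ := val_mem ends w ⟨T', hT'A⟩
  have hxT' : x ∉ T' := by
    have := hT'.1
    intro hx
    have h2 := this hx
    simp [Finset.mem_sdiff] at h2
  have hVpos : 1 ≤ Fintype.card V := Fintype.card_pos_iff.2 hTA.2.1.nonempty
  by_cases hx : x ∈ TA
  · -- exchange x ∈ TA \ T' for some f ∈ T' \ TA
    obtain ⟨f, hf₁, hf₂, hH₁c, hH₁card, hH₂c, hH₂card⟩ :=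
      exchange hT'.2.1 (by have := hT'.2.2; omega) hTA.2.1 (by have := hTA.2.2; omega) hx hxT'
    have hfB : f ∉ insert x B := by
      have := hT'.1 hf₁
      simp only [Finset.mem_sdiff, Finset.mem_univ, true_and] at this
      exact this
    -- tree avoiding insert x A : insert f (TA.erase x)
    have hfeas₂ : Feas ends (insert x A) (insert f (TA.erase x)) := by
      refine ⟨?_, hH₂c, by omega⟩
      intro z hz
      simp only [Finset.mem_sdiff, Finset.mem_univ, true_and, Finset.mem_insert]
      rcases Finset.mem_insert.1 hz with rfl | hz
      · rintro (h | hzA)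
        · exact hfB (Finset.mem_insert.2 (Or.inl h))
        · exact hfB (Finset.mem_insert.2 (Or.inr (hAB hzA)))
      · obtain ⟨hzx, hzTA⟩ := Finset.mem_erase.1 hz
        rintro (h | hzA)
        · exact hzx h
        · have := hTA.1 hzTA
          simp only [Finset.mem_sdiff, Finset.mem_univ, true_and] at this
          exact this hzA
    -- tree avoiding B : insert x (T'.erase f)
    have hfeas₁ : Feas ends B (insert x (T'.erase f)) := by
      refine ⟨?_, hH₁c, by omega⟩
      intro z hz
      simp only [Finset.mem_sdiff, Finset.mem_univ, true_and]
      rcases Finset.mem_insert.1 hz with rfl | hz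
      · exact hxB
      · have := hT'.1 (Finset.mem_of_mem_erase hz)
        simp only [Finset.mem_sdiff, Finset.mem_univ, true_and, Finset.mem_insert] at this
        exact fun hc => this (Or.inr hc)
    have h1 := val_le ends w hfeas₂
    have h2 := val_le ends w hfeas₁
    have hs1 : ∑ e ∈ insert f (TA.erase x), w e = w f + (∑ e ∈ TA, w e - w x) := by
      rw [Finset.sum_insert (fun h => hf₂ (Finset.mem_of_mem_erase h)),
        Finset.sum_erase_eq_sub hx]
    have hs2 : ∑ e ∈ insert x (T'.erase f), w e = w x + (∑ e ∈ T', w e - w f) := by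
      rw [Finset.sum_insert (fun h => hxT' (Finset.mem_of_mem_erase h)),
        Finset.sum_erase_eq_sub hf₁]
    rw [hvalA, hval']
    linarith
  · have h1 : Feas ends (insert x A) TA := by
      refine ⟨?_, hTA.2⟩
      intro z hz
      have := hTA.1 hz
      simp only [Finset.mem_sdiff, Finset.mem_univ, true_and, Finset.mem_insert] at this ⊢
      rintro (rfl | hzA)
      · exact hx hz
      · exact this hzA
    have := val_le ends w h1
    have h2 := val_le ends w hT'B
    rw [hvalA, hval']
    linarith

end VAL

/-- `val` is supermodular on the domain of interdiction sets whose removal keeps the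
graph connected. -/
theorem stmt1 {V E : Type*} [Fintype V] [Fintype E] [DecidableEq E]
    (ends : E → Sym2 V) (w : E → ℝ) (hw : ∀ e, 0 ≤ w e)
    (A₁ A₂ : Finset E)
    (hconn : (mgraph ends (Finset.univ \ (A₁ ∪ A₂))).Connected) :
    val ends w A₁ + val ends w A₂ ≤ val ends w (A₁ ∩ A₂) + val ends w (A₁ ∪ A₂) := by
  classical
  obtain ⟨T, hTsub, hTc, hTm⟩ := exists_min (Finset.univ \ (A₁ ∪ A₂)) hconn
  have hTcard := card_min hTc hTm
  have hVpos : 1 ≤ Fintype.card V := Fintype.card_pos_iff.2 hTc.nonempty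
  have hfeasU : Feas ends (A₁ ∪ A₂) T := ⟨hTsub, hTc, by omega⟩
  have key : ∀ S : Finset E, S ⊆ A₁ \ A₂ →
      val ends w ((A₁ ∩ A₂) ∪ S) + val ends w A₂ ≤
      val ends w (A₁ ∩ A₂) + val ends w (A₂ ∪ S) := by
    intro S
    induction S using Finset.induction_on with
    | empty =>
      intro _
      rw [Finset.union_empty, Finset.union_empty]
    | @insert x S hxS ih =>
      intro hS
      have hsub' : S ⊆ A₁ \ A₂ := fun z hz => hS (Finset.mem_insert_of_mem hz)
      have hx := hS (Finset.mem_insert_self x S)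
      rw [Finset.mem_sdiff] at hx
      have hAB : (A₁ ∩ A₂) ∪ S ⊆ A₂ ∪ S :=
        Finset.union_subset_union Finset.inter_subset_right (Finset.Subset.refl S)
      have hxB : x ∉ A₂ ∪ S := by
        rw [Finset.mem_union]
        rintro (h | h)
        · exact hx.2 h
        · exact hxS h
      have hfeas : ∃ T', Feas ends (insert x (A₂ ∪ S)) T' := by
        refine ⟨T, feas_mono ends ?_ hfeasU⟩
        intro z hz
        rcases Finset.mem_insert.1 hz with rfl | hz
        · exact Finset.mem_union_left A₂ hx.1
        · rcases Finset.mem_union.1 hz with h | h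
          · exact Finset.mem_union_right A₁ h
          · exact Finset.mem_union_left A₂ (Finset.mem_sdiff.1 (hsub' h)).1
      have hstep := step ends w ((A₁ ∩ A₂) ∪ S) (A₂ ∪ S) x hAB hxB hfeas
      have hih := ih hsub'
      rw [Finset.union_insert, Finset.union_insert]
      linarith
  have hfin := key (A₁ \ A₂) (Finset.Subset.refl _)
  have hiu : A₁ ∩ A₂ ∪ A₁ \ A₂ = A₁ := by
    ext z
    simp only [Finset.mem_union, Finset.mem_inter, Finset.mem_sdiff]
    tauto
  rw [hiu] at hfin
  rw [Finset.union_sdiff_self_eq_union, Finset.union_comm A₂ A₁] at hfin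
  exact hfin
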